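/- Let E be a real inner product space and consider SoftPull iterates on a probability space: random vectors w^{r,m}_k and g^{r,m}_k (r ≥ 0, 0 ≤ m ≤ M−1, 1 ≤ k ≤ K, K ≥ 2, M ≥ 1) with w^{0,0}_k = w₀ deterministic and identical for all k, w^{r,m+1}_k = w^{r,m}_k − η·g^{r,m}_k, and w^{r+1,0}_k = λ'·w^{r,M}_k + (1−λ')·w̄^{r,M}, where λ' ∈ [0,1) and bars denote uniform averages over k. If (1/K)·Σ_{k=1}^K E‖g^{r',m}_k‖² ≤ 2(G² + σ²) for all r' ≤ r and all m, then (1/K)·Σ_{k=1}^K E‖w^{r,M}_k − w̄^{r,M}‖² ≤ 2M²(G² + σ²)η²·((1 − (λ')^{r+1})/(1 − λ'))². -/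

import Mathlib

open MeasureTheory

/-- Weighted Cauchy–Schwarz: `‖∑ cᵢ • vᵢ‖² ≤ (∑ cᵢ) * ∑ cᵢ ‖vᵢ‖²` for nonnegative weights. -/
lemma sp_weighted_cs {E : Type*} [NormedAddCommGroup E] [InnerProductSpace ℝ E]
    {ι : Type*} (s : Finset ι) (c : ι → ℝ) (hc : ∀ i ∈ s, 0 ≤ c i) (v : ι → E) :
    ‖∑ i ∈ s, c i • v i‖ ^ 2 ≤ (∑ i ∈ s, c i) * ∑ i ∈ s, c i * ‖v i‖ ^ 2 := by
  have h1 : ‖∑ i ∈ s, c i • v i‖ ≤ ∑ i ∈ s, Real.sqrt (c i) * (Real.sqrt (c i) * ‖v i‖) :=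
    (norm_sum_le _ _).trans (Finset.sum_le_sum fun i hi => by
      rw [norm_smul, Real.norm_eq_abs, abs_of_nonneg (hc i hi), ← mul_assoc,
        Real.mul_self_sqrt (hc i hi)])
  calc ‖∑ i ∈ s, c i • v i‖ ^ 2
      ≤ (∑ i ∈ s, Real.sqrt (c i) * (Real.sqrt (c i) * ‖v i‖)) ^ 2 := by
        have h0 : (0:ℝ) ≤ ‖∑ i ∈ s, c i • v i‖ := norm_nonneg _
        nlinarith [h1]
    _ ≤ (∑ i ∈ s, Real.sqrt (c i) ^ 2) * ∑ i ∈ s, (Real.sqrt (c i) * ‖v i‖) ^ 2 :=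
        Finset.sum_mul_sq_le_sq_mul_sq s _ _
    _ = (∑ i ∈ s, c i) * ∑ i ∈ s, c i * ‖v i‖ ^ 2 := by
        congr 1
        · exact Finset.sum_congr rfl fun i hi => Real.sq_sqrt (hc i hi)
        · exact Finset.sum_congr rfl fun i hi => by rw [mul_pow, Real.sq_sqrt (hc i hi)]

/-- Pointwise "variance" bound: the sum of squared deviations from the mean is at most
the sum of squared norms. -/
lemma sp_var_le {E : Type*} [NormedAddCommGroup E] [InnerProductSpace ℝ E]
    {K : ℕ} (hK : (K:ℝ) ≠ 0) (v : Fin K → E) :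
    ∑ k, ‖v k - (1 / (K:ℝ)) • ∑ k', v k'‖ ^ 2 ≤ ∑ k, ‖v k‖ ^ 2 := by
  set b : E := (1 / (K:ℝ)) • ∑ k', v k' with hb
  have hsum : ∑ k', v k' = (K:ℝ) • b := by
    rw [hb, smul_smul]
    field_simp
    rw [one_smul]
  have hinner : ∑ k, (inner ℝ (v k) b : ℝ) = (K:ℝ) * ‖b‖ ^ 2 := by
    rw [← sum_inner, hsum, real_inner_smul_left, real_inner_self_eq_norm_sq]
  have hexp : ∑ k, ‖v k - b‖ ^ 2
      = (∑ k, ‖v k‖ ^ 2) - 2 * ((K:ℝ) * ‖b‖ ^ 2) + (K:ℝ) * ‖b‖ ^ 2 := by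
    have h : ∀ k : Fin K, ‖v k - b‖ ^ 2 = ‖v k‖ ^ 2 - 2 * (inner ℝ (v k) b : ℝ) + ‖b‖ ^ 2 :=
      fun k => norm_sub_sq_real _ _
    rw [Finset.sum_congr rfl fun k _ => h k, Finset.sum_add_distrib, Finset.sum_sub_distrib,
      ← Finset.mul_sum, hinner, Finset.sum_const, Finset.card_univ, Fintype.card_fin,
      nsmul_eq_mul]
  have hpos : 0 ≤ (K:ℝ) * ‖b‖ ^ 2 := by positivity
  linarith [hexp]

/-- Expected squared deviation of SoftPull iterates from their average after round `r`,
under the second-moment bound `(1/K)·Σ_k E‖g^{r',m}_k‖² ≤ 2(G²+σ²)`. -/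
theorem stmt_4 {E : Type*} [NormedAddCommGroup E] [InnerProductSpace ℝ E]
    {Ω : Type*} [MeasurableSpace Ω] (μ : Measure Ω) [IsProbabilityMeasure μ]
    (K M : ℕ) (hK : 2 ≤ K) (hM : 1 ≤ M) (lam' η G σ : ℝ) (hη : 0 < η)
    (hlam'0 : 0 ≤ lam') (hlam'1 : lam' < 1) (w₀ : E)
    (w g : ℕ → ℕ → Fin K → Ω → E)
    (hinit : ∀ k ω, w 0 0 k ω = w₀)
    (hlocal : ∀ r, ∀ m < M, ∀ k ω, w r (m + 1) k ω = w r m k ω - η • g r m k ω)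
    (hmix : ∀ r k ω, w (r + 1) 0 k ω =
      lam' • w r M k ω + (1 - lam') • ((1 / (K : ℝ)) • ∑ k', w r M k' ω))
    (r : ℕ)
    (hgI : ∀ r' ≤ r, ∀ m < M, ∀ k, Integrable (fun ω => ‖g r' m k ω‖ ^ 2) μ)
    (hdevI : ∀ k, Integrable
      (fun ω => ‖w r M k ω - (1 / (K : ℝ)) • ∑ k', w r M k' ω‖ ^ 2) μ)
    (hbound : ∀ r' ≤ r, ∀ m < M,
      (1 / (K : ℝ)) * ∑ k, ∫ ω, ‖g r' m k ω‖ ^ 2 ∂μ ≤ 2 * (G ^ 2 + σ ^ 2)) :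
    (1 / (K : ℝ)) * ∑ k, ∫ ω, ‖w r M k ω - (1 / (K : ℝ)) • ∑ k', w r M k' ω‖ ^ 2 ∂μ ≤
      2 * M ^ 2 * (G ^ 2 + σ ^ 2) * η ^ 2 * ((1 - lam' ^ (r + 1)) / (1 - lam')) ^ 2 := by
  have hK0 : 0 < K := lt_of_lt_of_le (by norm_num) hK
  have hKR : (0:ℝ) < (K:ℝ) := by exact_mod_cast hK0
  have hKne : (K:ℝ) ≠ 0 := ne_of_gt hKR
  -- unrolled local steps
  have hunroll : ∀ rr k ω, w rr M k ω
      = w rr 0 k ω - η • ∑ m ∈ Finset.range M, g rr m k ω := by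
    intro rr k ω
    have h : ∀ n, n ≤ M → w rr n k ω = w rr 0 k ω - η • ∑ m ∈ Finset.range n, g rr m k ω := by
      intro n
      induction n with
      | zero => intro _; simp
      | succ n ih =>
        intro hn
        rw [hlocal rr n (Nat.lt_of_succ_le hn) k ω, ih (Nat.le_of_succ_le hn),
          Finset.sum_range_succ, smul_add, sub_sub]
    exact h M le_rfl
  -- the average is preserved by mixing
  have havgmix : ∀ rr ω, ∑ k', w (rr+1) 0 k' ω = ∑ k', w rr M k' ω := by
    intro rr ω
    have h1 : ∑ k', w (rr+1) 0 k' ω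
        = lam' • (∑ k', w rr M k' ω)
          + (K:ℝ) • ((1 - lam') • ((1/(K:ℝ)) • ∑ k'', w rr M k'' ω)) := by
      rw [Finset.sum_congr rfl fun k _ => hmix rr k ω, Finset.sum_add_distrib,
        ← Finset.smul_sum, Finset.sum_const, Finset.card_univ, Fintype.card_fin,
        ← Nat.cast_smul_eq_nsmul ℝ]
    rw [h1, smul_smul, smul_smul]
    have h2 : (K:ℝ) * (1 - lam') * (1/(K:ℝ)) = 1 - lam' := by
      field_simp
    rw [h2, ← add_smul]
    norm_num
  -- deviation identity over one round of local steps
  have hround : ∀ rr k ω,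
      w rr M k ω - (1/(K:ℝ)) • ∑ k', w rr M k' ω
        = (w rr 0 k ω - (1/(K:ℝ)) • ∑ k', w rr 0 k' ω)
          - η • ∑ m ∈ Finset.range M,
              (g rr m k ω - (1/(K:ℝ)) • ∑ k', g rr m k' ω) := by
    intro rr k ω
    rw [hunroll rr k ω]
    have e1 : ∑ k', w rr M k' ω
        = (∑ k', w rr 0 k' ω) - η • ∑ m ∈ Finset.range M, ∑ k', g rr m k' ω := by
      rw [Finset.sum_congr rfl fun k' _ => hunroll rr k' ω, Finset.sum_sub_distrib,
        ← Finset.smul_sum, Finset.sum_comm]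
    rw [e1]
    have e2 : ∑ m ∈ Finset.range M, (g rr m k ω - (1/(K:ℝ)) • ∑ k', g rr m k' ω)
        = (∑ m ∈ Finset.range M, g rr m k ω)
          - (1/(K:ℝ)) • ∑ m ∈ Finset.range M, ∑ k', g rr m k' ω := by
      rw [Finset.sum_sub_distrib, ← Finset.smul_sum]
    rw [e2]
    module
  -- zero deviation at initialization
  have hbase : ∀ k ω, w 0 0 k ω - (1/(K:ℝ)) • ∑ k', w 0 0 k' ω = 0 := by
    intro k ω
    simp only [hinit]
    rw [Finset.sum_const, Finset.card_univ, Fintype.card_fin,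
      ← Nat.cast_smul_eq_nsmul ℝ, smul_smul, one_div, inv_mul_cancel₀ hKne, one_smul, sub_self]
  -- mixing contracts deviations by lam'
  have hmixD : ∀ rr k ω,
      w (rr+1) 0 k ω - (1/(K:ℝ)) • ∑ k', w (rr+1) 0 k' ω
        = lam' • (w rr M k ω - (1/(K:ℝ)) • ∑ k', w rr M k' ω) := by
    intro rr k ω
    rw [hmix rr k ω, havgmix rr ω]
    module
  -- key unrolled deviation identity
  have key : ∀ rr k ω,
      w rr M k ω - (1/(K:ℝ)) • ∑ k', w rr M k' ω
        = (-η) • ∑ s ∈ Finset.range (rr+1), ∑ m ∈ Finset.range M,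
            lam' ^ (rr - s) • (g s m k ω - (1/(K:ℝ)) • ∑ k', g s m k' ω) := by
    intro rr
    induction rr with
    | zero =>
      intro k ω
      rw [hround 0 k ω, hbase k ω]
      simp only [zero_add, Finset.range_one, Finset.sum_singleton, Nat.sub_self, pow_zero,
        one_smul]
      module
    | succ rr ih =>
      intro k ω
      have hexp : ∀ s ∈ Finset.range (rr+1),
          (∑ m ∈ Finset.range M,
            lam' ^ (rr+1-s) • (g s m k ω - (1/(K:ℝ)) • ∑ k', g s m k' ω))
          = lam' • ∑ m ∈ Finset.range M,
              lam' ^ (rr-s) • (g s m k ω - (1/(K:ℝ)) • ∑ k', g s m k' ω) := by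
        intro s hs
        have hs' : s < rr + 1 := Finset.mem_range.mp hs
        rw [Finset.smul_sum]
        refine Finset.sum_congr rfl fun m _ => ?_
        have he : rr + 1 - s = (rr - s) + 1 := by omega
        rw [he, pow_succ', ← smul_smul]
      have hsplit : ∑ s ∈ Finset.range (rr+1+1), ∑ m ∈ Finset.range M,
            lam' ^ (rr+1-s) • (g s m k ω - (1/(K:ℝ)) • ∑ k', g s m k' ω)
          = lam' • (∑ s ∈ Finset.range (rr+1), ∑ m ∈ Finset.range M,
              lam' ^ (rr-s) • (g s m k ω - (1/(K:ℝ)) • ∑ k', g s m k' ω))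
            + ∑ m ∈ Finset.range M,
                (g (rr+1) m k ω - (1/(K:ℝ)) • ∑ k', g (rr+1) m k' ω) := by
        rw [Finset.sum_range_succ]
        congr 1
        · conv_rhs => rw [Finset.smul_sum]
          exact Finset.sum_congr rfl hexp
        · simp only [Nat.sub_self, pow_zero, one_smul]
      rw [hround (rr+1) k ω, hmixD rr k ω, ih k ω, hsplit]
      module
  -- the geometric sum
  set S : ℝ := ∑ s ∈ Finset.range (r+1), lam' ^ s with hS
  have hSnn : 0 ≤ S := Finset.sum_nonneg fun s _ => pow_nonneg hlam'0 s
  have hlamne : lam' ≠ 1 := ne_of_lt hlam'1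
  have h1l : (1:ℝ) - lam' ≠ 0 := by intro h; apply hlamne; linarith
  have hl1 : lam' - 1 ≠ 0 := by intro h; apply hlamne; linarith
  have hSeq : S = (1 - lam' ^ (r+1)) / (1 - lam') := by
    rw [hS, geom_sum_eq hlamne]
    field_simp
    ring
  -- sum of the weights
  have hcsum : ∑ p ∈ (Finset.range (r+1)) ×ˢ (Finset.range M), lam' ^ (r - p.1)
      = (M:ℝ) * S := by
    rw [Finset.sum_product]
    simp only [Finset.sum_const, Finset.card_range, nsmul_eq_mul]
    rw [← Finset.mul_sum]
    congr 1
    rw [hS, ← Finset.sum_range_reflect (fun s => lam' ^ s) (r+1)]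
    exact Finset.sum_congr rfl fun s _ => by norm_num
  -- pointwise Cauchy–Schwarz bound, per client
  have hptk : ∀ (k : Fin K) ω, ‖w r M k ω - (1/(K:ℝ)) • ∑ k', w r M k' ω‖ ^ 2
      ≤ η^2 * ((M:ℝ)*S) * ∑ p ∈ (Finset.range (r+1)) ×ˢ (Finset.range M),
          lam' ^ (r - p.1) * ‖g p.1 p.2 k ω - (1/(K:ℝ)) • ∑ k', g p.1 p.2 k' ω‖ ^ 2 := by
    intro k ω
    rw [key r k ω]
    have hV : ∑ s ∈ Finset.range (r+1), ∑ m ∈ Finset.range M,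
        lam' ^ (r - s) • (g s m k ω - (1/(K:ℝ)) • ∑ k', g s m k' ω)
        = ∑ p ∈ (Finset.range (r+1)) ×ˢ (Finset.range M),
            lam' ^ (r - p.1) • (g p.1 p.2 k ω - (1/(K:ℝ)) • ∑ k', g p.1 p.2 k' ω) :=
      (Finset.sum_product (Finset.range (r+1)) (Finset.range M)
        (fun p => lam' ^ (r - p.1) • (g p.1 p.2 k ω - (1/(K:ℝ)) • ∑ k', g p.1 p.2 k' ω))).symm
    rw [hV, norm_smul, mul_pow]
    have habs : ‖-η‖^2 = η^2 := by rw [norm_neg, Real.norm_eq_abs, sq_abs]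
    rw [habs, mul_assoc]
    refine mul_le_mul_of_nonneg_left ?_ (sq_nonneg η)
    calc ‖∑ p ∈ (Finset.range (r+1)) ×ˢ (Finset.range M),
            lam' ^ (r - p.1) • (g p.1 p.2 k ω - (1/(K:ℝ)) • ∑ k', g p.1 p.2 k' ω)‖ ^ 2
        ≤ (∑ p ∈ (Finset.range (r+1)) ×ˢ (Finset.range M), lam' ^ (r - p.1))
            * ∑ p ∈ (Finset.range (r+1)) ×ˢ (Finset.range M),
              lam' ^ (r - p.1) * ‖g p.1 p.2 k ω - (1/(K:ℝ)) • ∑ k', g p.1 p.2 k' ω‖ ^ 2 :=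
          sp_weighted_cs _ _ (fun p _ => pow_nonneg hlam'0 _) _
      _ = (M:ℝ)*S * ∑ p ∈ (Finset.range (r+1)) ×ˢ (Finset.range M),
              lam' ^ (r - p.1) * ‖g p.1 p.2 k ω - (1/(K:ℝ)) • ∑ k', g p.1 p.2 k' ω‖ ^ 2 := by
          rw [hcsum]
  have hMSnn : (0:ℝ) ≤ η^2 * ((M:ℝ)*S) :=
    mul_nonneg (sq_nonneg η) (mul_nonneg (Nat.cast_nonneg M) hSnn)
  -- pointwise bound after summing over clients
  have hpt : ∀ ω, (∑ k, ‖w r M k ω - (1/(K:ℝ)) • ∑ k', w r M k' ω‖ ^ 2)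
      ≤ η^2 * ((M:ℝ)*S) * ∑ p ∈ (Finset.range (r+1)) ×ˢ (Finset.range M),
          lam' ^ (r - p.1) * ∑ k, ‖g p.1 p.2 k ω‖ ^ 2 := by
    intro ω
    calc (∑ k, ‖w r M k ω - (1/(K:ℝ)) • ∑ k', w r M k' ω‖ ^ 2)
        ≤ ∑ k : Fin K, η^2 * ((M:ℝ)*S) * ∑ p ∈ (Finset.range (r+1)) ×ˢ (Finset.range M),
            lam' ^ (r - p.1) * ‖g p.1 p.2 k ω - (1/(K:ℝ)) • ∑ k', g p.1 p.2 k' ω‖ ^ 2 :=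
          Finset.sum_le_sum fun k _ => hptk k ω
      _ = η^2 * ((M:ℝ)*S) * ∑ p ∈ (Finset.range (r+1)) ×ˢ (Finset.range M),
            lam' ^ (r - p.1) * ∑ k, ‖g p.1 p.2 k ω - (1/(K:ℝ)) • ∑ k', g p.1 p.2 k' ω‖ ^ 2 := by
          rw [← Finset.mul_sum, Finset.sum_comm]
          congr 1
          exact Finset.sum_congr rfl fun p _ => (Finset.mul_sum _ _ _).symm
      _ ≤ η^2 * ((M:ℝ)*S) * ∑ p ∈ (Finset.range (r+1)) ×ˢ (Finset.range M),
            lam' ^ (r - p.1) * ∑ k, ‖g p.1 p.2 k ω‖ ^ 2 := by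
          refine mul_le_mul_of_nonneg_left ?_ hMSnn
          exact Finset.sum_le_sum fun p _ =>
            mul_le_mul_of_nonneg_left (sp_var_le hKne _) (pow_nonneg hlam'0 _)
  -- membership facts
  have hmem : ∀ p ∈ (Finset.range (r+1)) ×ˢ (Finset.range M), p.1 ≤ r ∧ p.2 < M := by
    intro p hp
    obtain ⟨h1, h2⟩ := Finset.mem_product.mp hp
    exact ⟨Nat.lt_succ_iff.mp (Finset.mem_range.mp h1), Finset.mem_range.mp h2⟩
  -- integrability of the RHS
  have hRI : ∀ p ∈ (Finset.range (r+1)) ×ˢ (Finset.range M),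
      Integrable (fun ω => lam' ^ (r - p.1) * ∑ k, ‖g p.1 p.2 k ω‖ ^ 2) μ := by
    intro p hp
    obtain ⟨h1, h2⟩ := hmem p hp
    exact (integrable_finset_sum _ fun k _ => hgI p.1 h1 p.2 h2 k).const_mul _
  -- integrate the pointwise bound
  have hint : ∑ k, ∫ ω, ‖w r M k ω - (1/(K:ℝ)) • ∑ k', w r M k' ω‖ ^ 2 ∂μ
      ≤ η^2 * ((M:ℝ)*S) * ∑ p ∈ (Finset.range (r+1)) ×ˢ (Finset.range M),
          lam' ^ (r - p.1) * ∑ k, ∫ ω, ‖g p.1 p.2 k ω‖ ^ 2 ∂μ := by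
    have h1 : ∫ ω, (∑ k, ‖w r M k ω - (1/(K:ℝ)) • ∑ k', w r M k' ω‖ ^ 2) ∂μ
        ≤ ∫ ω, η^2 * ((M:ℝ)*S) * ∑ p ∈ (Finset.range (r+1)) ×ˢ (Finset.range M),
            lam' ^ (r - p.1) * ∑ k, ‖g p.1 p.2 k ω‖ ^ 2 ∂μ :=
      integral_mono (integrable_finset_sum _ fun k _ => hdevI k)
        ((integrable_finset_sum _ hRI).const_mul _) hpt
    rw [integral_finset_sum _ (fun k _ => hdevI k), integral_const_mul,
      integral_finset_sum _ hRI] at h1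
    have h2 : ∀ p ∈ (Finset.range (r+1)) ×ˢ (Finset.range M),
        ∫ ω, lam' ^ (r - p.1) * ∑ k, ‖g p.1 p.2 k ω‖ ^ 2 ∂μ
          = lam' ^ (r - p.1) * ∑ k, ∫ ω, ‖g p.1 p.2 k ω‖ ^ 2 ∂μ := by
      intro p hp
      obtain ⟨hh1, hh2⟩ := hmem p hp
      rw [integral_const_mul, integral_finset_sum _ fun k _ => hgI p.1 hh1 p.2 hh2 k]
    rw [Finset.sum_congr rfl h2] at h1
    exact h1
  -- apply the second-moment bound
  have hgsum : ∀ p ∈ (Finset.range (r+1)) ×ˢ (Finset.range M),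
      ∑ k, ∫ ω, ‖g p.1 p.2 k ω‖ ^ 2 ∂μ ≤ (K:ℝ) * (2 * (G^2 + σ^2)) := by
    intro p hp
    obtain ⟨h1, h2⟩ := hmem p hp
    have hb := hbound p.1 h1 p.2 h2
    have h3 := mul_le_mul_of_nonneg_left hb (le_of_lt hKR)
    rw [← mul_assoc, mul_one_div_cancel hKne, one_mul] at h3
    exact h3
  have hfinal : ∑ k, ∫ ω, ‖w r M k ω - (1/(K:ℝ)) • ∑ k', w r M k' ω‖ ^ 2 ∂μ
      ≤ η^2 * ((M:ℝ)*S) * (((M:ℝ)*S) * ((K:ℝ) * (2 * (G^2 + σ^2)))) := by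
    refine hint.trans ?_
    refine mul_le_mul_of_nonneg_left ?_ hMSnn
    calc ∑ p ∈ (Finset.range (r+1)) ×ˢ (Finset.range M),
          lam' ^ (r - p.1) * ∑ k, ∫ ω, ‖g p.1 p.2 k ω‖ ^ 2 ∂μ
        ≤ ∑ p ∈ (Finset.range (r+1)) ×ˢ (Finset.range M),
            lam' ^ (r - p.1) * ((K:ℝ) * (2 * (G^2 + σ^2))) :=
          Finset.sum_le_sum fun p hp =>
            mul_le_mul_of_nonneg_left (hgsum p hp) (pow_nonneg hlam'0 _)
      _ = ((M:ℝ)*S) * ((K:ℝ) * (2 * (G^2 + σ^2))) := by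
          rw [← Finset.sum_mul, hcsum]
  -- conclude
  rw [← hSeq]
  have h4 := mul_le_mul_of_nonneg_left hfinal (by positivity : (0:ℝ) ≤ 1/(K:ℝ))
  calc (1 / (K : ℝ)) * ∑ k, ∫ ω, ‖w r M k ω - (1 / (K : ℝ)) • ∑ k', w r M k' ω‖ ^ 2 ∂μ
      ≤ (1/(K:ℝ)) * (η^2 * ((M:ℝ)*S) * (((M:ℝ)*S) * ((K:ℝ) * (2 * (G^2 + σ^2))))) := h4
    _ = 2 * M ^ 2 * (G ^ 2 + σ ^ 2) * η ^ 2 * S ^ 2 := by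
        field_simp
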